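/- Let A be an m×n real matrix with m ≥ 1, let b ∈ ℝᵐ, and let M = A ⊙ Aᵀ be the m×m tropical product of A with its transpose. If (M ⊙ M⁻)_{ij} ≤ b_i − b_j for all i, j ∈ {1,…,m}, then the vector X = Aᵀ ⊙ (M⁻ ⊙ b) ∈ ℝⁿ is a solution of the system A ⊙ X = b. -/

import Mathlib

open Matrix

open Matrix

/-- Tropical (max-plus) permanent of a square real matrix:
`per(A) = max over permutations σ of ∑ i, A i (σ i)`. -/
noncomputable def tperm {p : ℕ} (A : Matrix (Fin p) (Fin p) ℝ) : ℝ :=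
  Finset.univ.sup' ⟨1, Finset.mem_univ 1⟩
    (fun σ : Equiv.Perm (Fin p) => ∑ i, A i (σ i))

/-- `del A i j` is the matrix obtained from `A` by deleting row `i` and column `j`. -/
def del {p : ℕ} (A : Matrix (Fin (p+1)) (Fin (p+1)) ℝ) (i j : Fin (p+1)) :
    Matrix (Fin p) (Fin p) ℝ :=
  A.submatrix i.succAbove j.succAbove

/-- Tropical (max-plus) matrix product: `(P ⊙ Q) i j = max_k (P i k + Q k j)`. -/
noncomputable def tmul {l m n : ℕ} (P : Matrix (Fin l) (Fin (m+1)) ℝ)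
    (Q : Matrix (Fin (m+1)) (Fin n) ℝ) : Matrix (Fin l) (Fin n) ℝ :=
  fun i j => Finset.univ.sup' ⟨0, Finset.mem_univ 0⟩ (fun k => P i k + Q k j)

/-- Tropical (max-plus) matrix-vector product: `(P ⊙ x) i = max_k (P i k + x k)`. -/
noncomputable def tmulVec {l m : ℕ} (P : Matrix (Fin l) (Fin (m+1)) ℝ)
    (x : Fin (m+1) → ℝ) : Fin l → ℝ :=
  fun i => Finset.univ.sup' ⟨0, Finset.mem_univ 0⟩ (fun k => P i k + x k)

/-- The ε-adjoint: `adj(A)_{ij} = per(A(j|i))`. -/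
noncomputable def tadj {p : ℕ} (A : Matrix (Fin (p+1)) (Fin (p+1)) ℝ) :
    Matrix (Fin (p+1)) (Fin (p+1)) ℝ :=
  fun i j => tperm (del A j i)

/-- The pseudo-inverse: `A⁻_{ij} = per(A(j|i)) - per(A)`. -/
noncomputable def pinv {p : ℕ} (A : Matrix (Fin (p+1)) (Fin (p+1)) ℝ) :
    Matrix (Fin (p+1)) (Fin (p+1)) ℝ :=
  fun i j => tperm (del A j i) - tperm A


/-- Laplace-type expansion inequality in max-plus: per(M) ≤ max_k (M i k + per(M(i|k))). -/
lemma tperm_le_expand {p : ℕ} (M : Matrix (Fin (p+1)) (Fin (p+1)) ℝ) (i : Fin (p+1)) :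
    tperm M ≤ Finset.univ.sup' ⟨0, Finset.mem_univ 0⟩
      (fun k => M i k + tperm (del M i k)) := by
  apply Finset.sup'_le
  intro σ _
  set k := σ i with hk
  have hle : (∑ j, M j (σ j)) ≤ M i k + tperm (del M i k) := by
    rw [Fin.sum_univ_succAbove (fun j => M j (σ j)) i]
    refine add_le_add le_rfl ?_
    -- build permutation τ on Fin p
    set e : Option (Fin p) ≃ Option (Fin p) :=
      ((finSuccEquiv' i).symm.trans (σ : Fin (p+1) ≃ Fin (p+1))).trans (finSuccEquiv' k) with he
    have henone : e none = none := by
      simp [he, finSuccEquiv'_symm_none, ← hk, finSuccEquiv'_at]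
    set τ := e.removeNone with hτ
    have key : ∀ a : Fin p, k.succAbove (τ a) = σ (i.succAbove a) := by
      intro a
      have h1 : e (some a) = finSuccEquiv' k (σ (i.succAbove a)) := by
        simp [he, finSuccEquiv'_symm_some]
      have h2 : ∃ x', e (some a) = some x' := by
        rcases Option.eq_none_or_eq_some (e (some a)) with hn | hs
        · exfalso
          have := e.injective (hn.trans henone.symm)
          simp at this
        · exact hs
      have h3 : some (τ a) = e (some a) := Equiv.removeNone_some e h2
      rw [h1] at h3
      have := congrArg (finSuccEquiv' k).symm h3
      rwa [finSuccEquiv'_symm_some, Equiv.symm_apply_apply] at this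
    have hsum : (∑ a, M (i.succAbove a) (σ (i.succAbove a)))
        = ∑ a, (del M i k) a (τ a) := by
      apply Finset.sum_congr rfl
      intro a _
      rw [del, Matrix.submatrix_apply, key a]
    rw [hsum, tperm]
    exact Finset.le_sup' (fun τ' : Equiv.Perm (Fin p) => ∑ a, (del M i k) a (τ' a)) (Finset.mem_univ τ)
  exact hle.trans (Finset.le_sup' (fun k' => M i k' + tperm (del M i k')) (Finset.mem_univ k))

theorem stmt13 {m n : ℕ} (A : Matrix (Fin (m+1)) (Fin (n+1)) ℝ) (b : Fin (m+1) → ℝ)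
    (h : ∀ i j, tmul (tmul A Aᵀ) (pinv (tmul A Aᵀ)) i j ≤ b i - b j) :
    ∀ i, tmulVec A (tmulVec Aᵀ (tmulVec (pinv (tmul A Aᵀ)) b)) i = b i := by
  intro i
  set M := tmul A Aᵀ with hM
  set y : Fin (m+1) → ℝ := tmulVec (pinv M) b with hy
  set X : Fin (n+1) → ℝ := tmulVec Aᵀ y with hX
  apply le_antisymm
  · -- upper bound
    apply Finset.sup'_le
    intro k _
    have hXk : X k ≤ b i - A i k := by
      apply Finset.sup'_le
      intro j _
      have hyj : y j ≤ b i - A i k - A j k := by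
        apply Finset.sup'_le
        intro l _
        have h1 : A i k + A j k ≤ M i j :=
          Finset.le_sup' (fun k' => A i k' + Aᵀ k' j) (Finset.mem_univ k)
        have h2 : M i j + pinv M j l ≤ tmul M (pinv M) i l :=
          Finset.le_sup' (fun j' => M i j' + pinv M j' l) (Finset.mem_univ j)
        have h3 := h i l
        linarith
      have : Aᵀ k j + y j ≤ b i - A i k := by
        rw [transpose_apply]; linarith
      exact this
    linarith
  · -- lower bound
    obtain ⟨j₀, _, hj₀⟩ := Finset.exists_mem_eq_sup' (⟨0, Finset.mem_univ 0⟩ :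
      (Finset.univ : Finset (Fin (m+1))).Nonempty)
      (fun k => M i k + tperm (del M i k))
    have h0 : 0 ≤ M i j₀ + pinv M j₀ i := by
      have := (tperm_le_expand M i).trans_eq hj₀
      simp only [pinv]
      linarith
    obtain ⟨k₀, _, hk₀⟩ := Finset.exists_mem_eq_sup' (⟨0, Finset.mem_univ 0⟩ :
      (Finset.univ : Finset (Fin (n+1))).Nonempty)
      (fun k => A i k + Aᵀ k j₀)
    have hM0 : M i j₀ = A i k₀ + A j₀ k₀ := by
      simpa [hM, tmul] using hk₀
    have s1 : pinv M j₀ i + b i ≤ y j₀ :=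
      Finset.le_sup' (fun l => pinv M j₀ l + b l) (Finset.mem_univ i)
    have s2 : Aᵀ k₀ j₀ + y j₀ ≤ X k₀ :=
      Finset.le_sup' (fun j => Aᵀ k₀ j + y j) (Finset.mem_univ j₀)
    have s3 : A i k₀ + X k₀ ≤ tmulVec A X i :=
      Finset.le_sup' (fun k => A i k + X k) (Finset.mem_univ k₀)
    rw [transpose_apply] at s2
    linarith [hM0 ▸ h0]
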